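/- Let G be a very well-covered graph with 2n vertices satisfying (∗). Then the acyclic reduction Ĝ of G is a Cohen-Macaulay very well-covered graph; concretely, Ĝ has 2t non-isolated vertices, minimum vertex cover size t, and (after relabeling so that directed edges of the condensation go from smaller to larger indices) satisfies conditions (∗), (∗∗), (i), and (ii). -/

import Mathlib

open Relation

/-- `C` is a vertex cover of `G`. -/
def IsVC {V : Type*} (G : SimpleGraph V) (C : Set V) : Prop :=
  ∀ ⦃u v : V⦄, G.Adj u v → u ∈ C ∨ v ∈ C

/-- `C` is a minimal vertex cover of `G`. -/
def IsMinVC {V : Type*} (G : SimpleGraph V) (C : Set V) : Prop :=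
  IsVC G C ∧ ∀ D : Set V, IsVC G D → D ⊆ C → D = C

/-- `S` is an independent set of `G`. -/
def IsIndep {V : Type*} (G : SimpleGraph V) (S : Set V) : Prop :=
  ∀ u ∈ S, ∀ v ∈ S, ¬ G.Adj u v

/-- `S` is a maximal independent set of `G`. -/
def IsMaxIndep {V : Type*} (G : SimpleGraph V) (S : Set V) : Prop :=
  IsIndep G S ∧ ∀ T : Set V, IsIndep G T → S ⊆ T → T = S

/-- `G` has no isolated vertices. -/
def NoIsolated {V : Type*} (G : SimpleGraph V) : Prop := ∀ v, ∃ w, G.Adj v w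

/-- The vertex set `{x_1,...,x_n} ∪ {y_1,...,y_n}`: `xv i = Sum.inl i`, `yv i = Sum.inr i`. -/
abbrev Vtx (n : ℕ) := Fin n ⊕ Fin n

def xv {n : ℕ} (i : Fin n) : Vtx n := Sum.inl i
def yv {n : ℕ} (i : Fin n) : Vtx n := Sum.inr i

/-- Condition (∗): X is a minimal vertex cover, Y is a maximal independent set,
and `x_i y_i` is an edge for every `i`. -/
def StarCond {n : ℕ} (G : SimpleGraph (Vtx n)) : Prop :=
  IsMinVC G (Set.range xv) ∧ IsMaxIndep G (Set.range yv) ∧ ∀ i, G.Adj (xv i) (yv i)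

/-- Condition (∗∗): `x_i y_j ∈ E(G)` implies `i ≤ j`. -/
def StarStarCond {n : ℕ} (G : SimpleGraph (Vtx n)) : Prop :=
  ∀ i j : Fin n, G.Adj (xv i) (yv j) → i ≤ j

/-- Condition (i): for distinct `i,j,k` and `z_i ∈ {x_i,y_i}`, if `z_i x_j` and `y_j x_k`
are edges then so is `z_i x_k`. -/
def CondI {n : ℕ} (G : SimpleGraph (Vtx n)) : Prop :=
  ∀ i j k : Fin n, i ≠ j → j ≠ k → i ≠ k →
    ∀ z ∈ ({xv i, yv i} : Set (Vtx n)),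
      G.Adj z (xv j) → G.Adj (yv j) (xv k) → G.Adj z (xv k)

/-- Condition (ii): `x_i y_j ∈ E(G)` implies `x_i x_j ∉ E(G)`. -/
def CondII {n : ℕ} (G : SimpleGraph (Vtx n)) : Prop :=
  ∀ i j : Fin n, G.Adj (xv i) (yv j) → ¬ G.Adj (xv i) (xv j)

/-- The minimum vertex cover size of `G` (the height of the edge ideal) is at least `n`. -/
def HeightN {n : ℕ} (G : SimpleGraph (Vtx n)) : Prop :=
  ∀ C : Finset (Vtx n), IsVC G ↑C → n ≤ C.card

/-- Directed edge `i → j` of the semidirected graph `𝔡_G`. -/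
def dirEdge {n : ℕ} (G : SimpleGraph (Vtx n)) (i j : Fin n) : Prop :=
  i ≠ j ∧ G.Adj (xv i) (yv j)

/-- Undirected edge `ij` of the semidirected graph `𝔡_G`. -/
def undirEdge {n : ℕ} (G : SimpleGraph (Vtx n)) (i j : Fin n) : Prop :=
  G.Adj (xv i) (xv j)
/-- The strong-connectivity setoid of a relation: mutual reachability. -/
def scSetoid {α : Type*} (r : α → α → Prop) : Setoid α where
  r i j := ReflTransGen r i j ∧ ReflTransGen r j i
  iseqv := ⟨fun _ => ⟨.refl, .refl⟩, fun h => ⟨h.2, h.1⟩,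
    fun h1 h2 => ⟨h1.1.trans h2.1, h2.2.trans h1.2⟩⟩

/-- The set of strong components of the semidirected graph `𝔡_G`. -/
def SC {n : ℕ} (G : SimpleGraph (Vtx n)) : Type :=
  Quotient (scSetoid (dirEdge G))

/-- The class of `i` in the strong components. -/
def scMk {n : ℕ} (G : SimpleGraph (Vtx n)) (i : Fin n) : SC G :=
  Quotient.mk (scSetoid (dirEdge G)) i

/-- Directed edge `a → b` of the condensation `𝔡̂_G`: the components are distinct and
there is a directed path in `𝔡_G` from a vertex of `Z_a` to a vertex of `Z_b`. -/
def condDir {n : ℕ} (G : SimpleGraph (Vtx n)) (a b : SC G) : Prop :=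
  a ≠ b ∧ ∃ i j : Fin n, scMk G i = a ∧ scMk G j = b ∧ ReflTransGen (dirEdge G) i j

/-- Undirected edge `ab` of the condensation `𝔡̂_G`. -/
def condUndir {n : ℕ} (G : SimpleGraph (Vtx n)) (a b : SC G) : Prop :=
  a ≠ b ∧ ∃ i j : Fin n, scMk G i = a ∧ scMk G j = b ∧ undirEdge G i j

/-- `A'` is an antichain of the condensation `𝔡̂_G`. -/
def AntichainC {n : ℕ} (G : SimpleGraph (Vtx n)) (A' : Finset (SC G)) : Prop :=
  ∀ a ∈ A', ∀ b ∈ A', a ≠ b → ¬ TransGen (condDir G) a b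

/-- `Ω_{A'}` for an antichain `A'` of the condensation: the union of the components `Z_b`
with `b ⪰ a` for some `a ∈ A'`. -/
def OmegaC {n : ℕ} (G : SimpleGraph (Vtx n)) (A' : Finset (SC G)) : Set (Fin n) :=
  {j | ∃ a ∈ A', ReflTransGen (condDir G) a (scMk G j)}

/-- The vertex set `{x_i : i ∉ Ω} ∪ {y_i : i ∈ Ω}`. -/
def coverOf {n : ℕ} (Ω : Set (Fin n)) : Set (Vtx n) :=
  {v | ∃ i : Fin n, (v = xv i ∧ i ∉ Ω) ∨ (v = yv i ∧ i ∈ Ω)}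
/-- The underlying relation of the acyclic reduction `Ĝ`, given a labeling
`e : Fin t ≃ SC G` of the strong components: edges `u_a v_a`, edges `u_a v_b` for
directed edges `a → b` of `𝔡̂_G`, and edges `u_a u_b` for undirected edges `ab` of `𝔡̂_G`. -/
def hatRel {n t : ℕ} (G : SimpleGraph (Vtx n)) (e : Fin t ≃ SC G) :
    Vtx t → Vtx t → Prop
  | Sum.inl a, Sum.inr b => a = b ∨ condDir G (e a) (e b)
  | Sum.inl a, Sum.inl b => condUndir G (e a) (e b)
  | _, _ => False

/-- The acyclic reduction `Ĝ` of `G`, relative to the labeling `e` of strong components. -/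
def hatG {n t : ℕ} (G : SimpleGraph (Vtx n)) (e : Fin t ≃ SC G) :
    SimpleGraph (Vtx t) :=
  SimpleGraph.fromRel (hatRel G e)


section Auxiliary

variable {n : ℕ} {G : SimpleGraph (Vtx n)}

lemma dirEdge_trans (h1 : CondI G) {i j k : Fin n} (hik : i ≠ k)
    (h : dirEdge G i j) (h' : dirEdge G j k) : dirEdge G i k := by
  refine ⟨hik, ?_⟩
  have := h1 k j i h'.1.symm h.1.symm (Ne.symm hik) (yv k)
    (by right; rfl) h'.2.symm h.2.symm
  exact this.symm

lemma rtg_dirEdge (h1 : CondI G) {i j : Fin n} (h : ReflTransGen (dirEdge G) i j) :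
    i = j ∨ dirEdge G i j := by
  induction h with
  | refl => exact Or.inl rfl
  | @tail b c _ hstep ih =>
    rcases ih with rfl | hib
    · exact Or.inr hstep
    · by_cases hic : i = c
      · exact Or.inl hic
      · exact Or.inr (dirEdge_trans h1 hic hib hstep)

lemma scMk_eq_iff {i j : Fin n} :
    scMk G i = scMk G j ↔
      (ReflTransGen (dirEdge G) i j ∧ ReflTransGen (dirEdge G) j i) :=
  ⟨fun h => Quotient.exact h, fun h => Quotient.sound h⟩

lemma condDir_asymm {a b : SC G} (h : condDir G a b) (h' : condDir G b a) : False := by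
  obtain ⟨hne, i, j, hi, hj, p⟩ := h
  obtain ⟨-, j', i', hj', hi', q⟩ := h'
  have p1 : ReflTransGen (dirEdge G) j j' := (scMk_eq_iff.mp (hj.trans hj'.symm)).1
  have p2 : ReflTransGen (dirEdge G) i' i := (scMk_eq_iff.mp (hi'.trans hi.symm)).1
  exact hne (hi.symm.trans ((scMk_eq_iff.mpr ⟨p, (p1.trans q).trans p2⟩).trans hj))

lemma condDir_trans' {a b c : SC G} (hac : a ≠ c) (h : condDir G a b)
    (h' : condDir G b c) : condDir G a c := by
  obtain ⟨-, i, j, hi, hj, p⟩ := h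
  obtain ⟨-, j', k, hj', hk, q⟩ := h'
  exact ⟨hac, i, k, hi, hk, (p.trans (scMk_eq_iff.mp (hj.trans hj'.symm)).1).trans q⟩

lemma condUndir_symm {a b : SC G} (h : condUndir G a b) : condUndir G b a := by
  obtain ⟨hne, i, j, hi, hj, hu⟩ := h
  exact ⟨hne.symm, j, i, hj, hi, hu.symm⟩

lemma condDir_rep (h1 : CondI G) {a b : SC G} (h : condDir G a b) {i j : Fin n}
    (hi : scMk G i = a) (hj : scMk G j = b) : dirEdge G i j := by
  obtain ⟨hne, i0, j0, hi0, hj0, p⟩ := h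
  have p1 : ReflTransGen (dirEdge G) i i0 := (scMk_eq_iff.mp (hi.trans hi0.symm)).1
  have p2 : ReflTransGen (dirEdge G) j0 j := (scMk_eq_iff.mp (hj0.trans hj.symm)).1
  have hij : i ≠ j := by
    rintro rfl
    exact hne (hi.symm.trans hj)
  rcases rtg_dirEdge h1 ((p1.trans p).trans p2) with rfl | hd
  · exact absurd rfl hij
  · exact hd

lemma hat_adj_xy {t : ℕ} (e : Fin t ≃ SC G) {a b : Fin t} :
    (hatG G e).Adj (xv a) (yv b) ↔ (a = b ∨ condDir G (e a) (e b)) := by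
  rw [hatG, SimpleGraph.fromRel_adj]
  constructor
  · rintro ⟨-, h | h⟩
    · exact h
    · exact (show False from h).elim
  · intro h
    exact ⟨by simp [xv, yv], Or.inl h⟩

lemma hat_adj_xx {t : ℕ} (e : Fin t ≃ SC G) {a b : Fin t} :
    (hatG G e).Adj (xv a) (xv b) ↔
      (a ≠ b ∧ (condUndir G (e a) (e b) ∨ condUndir G (e b) (e a))) := by
  rw [hatG, SimpleGraph.fromRel_adj]
  constructor
  · rintro ⟨hne, h⟩
    exact ⟨fun h' => hne (by rw [h']), h⟩
  · rintro ⟨hne, h⟩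
    exact ⟨by simpa [xv] using hne, h⟩

lemma hat_adj_xx' {t : ℕ} (e : Fin t ≃ SC G) {a b : Fin t}
    (h : (hatG G e).Adj (xv a) (xv b)) : condUndir G (e a) (e b) := by
  rcases (hat_adj_xx e).mp h with ⟨hne, h | h⟩
  · exact h
  · exact condUndir_symm h

lemma hat_adj_yy {t : ℕ} (e : Fin t ≃ SC G) {a b : Fin t} :
    ¬ (hatG G e).Adj (yv a) (yv b) := by
  rw [hatG, SimpleGraph.fromRel_adj]
  rintro ⟨-, h | h⟩ <;> exact h

end Auxiliary

/-- Lemma 4.6. Let `G` be a very well-covered graph with `2n` vertices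
satisfying (∗) (and the unmixedness conditions (i),(ii)). Then the acyclic reduction `Ĝ` is
a Cohen-Macaulay very well-covered graph: for some labeling of the `t` strong components in
which directed edges of the condensation go from smaller to larger indices, `Ĝ` has `2t`
non-isolated vertices, minimum vertex cover size `t`, and satisfies (∗), (∗∗), (i), (ii). -/
theorem acyclicReduction_CM {n : ℕ} (G : SimpleGraph (Vtx n))
    (hiso : NoIsolated G) (hht : HeightN G) (hstar : StarCond G)
    (h1 : CondI G) (h2 : CondII G) :
    ∃ (t : ℕ) (e : Fin t ≃ SC G),
      (∀ a b : Fin t, condDir G (e a) (e b) → a < b) ∧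
      NoIsolated (hatG G e) ∧ HeightN (hatG G e) ∧
      StarCond (hatG G e) ∧ StarStarCond (hatG G e) ∧
      CondI (hatG G e) ∧ CondII (hatG G e) := by
  classical
  letI po : PartialOrder (SC G) :=
    { le := fun a b => a = b ∨ condDir G a b
      le_refl := fun a => Or.inl rfl
      le_trans := by
        rintro a b c (rfl | hab) (rfl | hbc)
        · exact Or.inl rfl
        · exact Or.inr hbc
        · exact Or.inr hab
        · by_cases hac : a = c
          · exact Or.inl hac
          · exact Or.inr (condDir_trans' hac hab hbc)
      le_antisymm := by
        rintro a b (rfl | hab) (h | hba)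
        · rfl
        · rfl
        · exact h.symm
        · exact absurd hba (fun h => condDir_asymm hab h) }
  letI : Fintype (SC G) :=
    Fintype.ofSurjective (scMk G) (fun a => Quotient.exists_rep a)
  letI : Fintype (LinearExtension (SC G)) := (‹Fintype (SC G)› : Fintype (SC G))
  set t := Fintype.card (LinearExtension (SC G)) with ht
  let e0 : Fin t ≃o LinearExtension (SC G) := monoEquivOfFin _ rfl
  let e : Fin t ≃ SC G := e0.toEquiv
  -- the topological-sort property
  have hsort : ∀ a b : Fin t, condDir G (e a) (e b) → a < b := by
    intro a b hd
    have hle : toLinearExtension (e a) ≤ toLinearExtension (e b) :=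
      toLinearExtension.monotone (Or.inr hd)
    have hle' : e0 a ≤ e0 b := hle
    have hne : e0 a ≠ e0 b := by
      intro h
      exact hd.1 (congrArg e (e0.injective h))
    exact e0.lt_iff_lt.mp (lt_of_le_of_ne hle' hne)
  refine ⟨t, e, hsort, ?_, ?_, ?_, ?_, ?_, ?_⟩
  · -- NoIsolated
    rintro (a | a)
    · exact ⟨yv a, (hat_adj_xy e).mpr (Or.inl rfl)⟩
    · exact ⟨xv a, ((hat_adj_xy e).mpr (Or.inl rfl)).symm⟩
  · -- HeightN
    intro C hC
    set f : Fin t → Vtx t := fun a => if xv a ∈ C then xv a else yv a with hf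
    have hmem : ∀ a : Fin t, f a ∈ C := by
      intro a
      have hadj : (hatG G e).Adj (xv a) (yv a) := (hat_adj_xy e).mpr (Or.inl rfl)
      by_cases hx : xv a ∈ C
      · simp only [hf]; rw [if_pos hx]; exact hx
      · simp only [hf]; rw [if_neg hx]
        rcases hC hadj with h | h
        · exact absurd (Finset.mem_coe.mp h) hx
        · exact Finset.mem_coe.mp h
    have hinj : Set.InjOn f ↑(Finset.univ : Finset (Fin t)) := by
      intro a _ b _ hab
      simp only [hf] at hab
      split_ifs at hab with hh1 hh2 hh2
      · exact Sum.inl.inj hab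
      · exact absurd hab (by simp [xv, yv])
      · exact absurd hab (by simp [xv, yv])
      · exact Sum.inr.inj hab
    calc t = (Finset.univ : Finset (Fin t)).card := (Finset.card_fin t).symm
      _ ≤ C.card := Finset.card_le_card_of_injOn f (fun a _ => hmem a) hinj
  · -- StarCond
    refine ⟨⟨?_, ?_⟩, ⟨?_, ?_⟩, fun a => (hat_adj_xy e).mpr (Or.inl rfl)⟩
    · -- X is a VC
      rintro (a | a) (b | b) hadj
      · exact Or.inl ⟨a, rfl⟩
      · exact Or.inl ⟨a, rfl⟩
      · exact Or.inr ⟨b, rfl⟩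
      · exact absurd hadj (hat_adj_yy e)
    · -- minimality
      intro D hD hsub
      refine Set.Subset.antisymm hsub ?_
      rintro v ⟨a, rfl⟩
      rcases hD ((hat_adj_xy e).mpr (Or.inl rfl)) with h | h
      · exact h
      · obtain ⟨b, hb⟩ := hsub h
        exact absurd hb (by simp [xv, yv])
    · -- Y independent
      rintro u ⟨a, rfl⟩ v ⟨b, rfl⟩ hadj
      exact (hat_adj_yy e) hadj
    · -- Y maximal
      intro T hT hsub
      refine Set.Subset.antisymm ?_ hsub
      rintro (a | a) hv
      · exact absurd ((hat_adj_xy e).mpr (Or.inl rfl))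
          (hT (Sum.inl a) hv (yv a) (hsub ⟨a, rfl⟩))
      · exact ⟨a, rfl⟩
  · -- StarStarCond
    intro a b hadj
    rcases (hat_adj_xy e).mp hadj with rfl | hd
    · exact le_refl a
    · exact (hsort a b hd).le
  · -- CondI
    intro a b c hab hbc hac z hz hzb hbc'
    have hdcb : condDir G (e c) (e b) := by
      rcases (hat_adj_xy e).mp hbc'.symm with rfl | hd
      · exact absurd rfl hbc.symm
      · exact hd
    have heac : e a ≠ e c := fun h => hac (e.injective h)
    rcases hz with rfl | hz
    · -- z = xv a
      have hu : condUndir G (e a) (e b) := hat_adj_xx' e hzb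
      obtain ⟨hneab, i, j, hi, hj, hxx⟩ := hu
      obtain ⟨k0, hk0⟩ := Quotient.exists_rep (e c)
      have hk0' : scMk G k0 = e c := hk0
      have hde : dirEdge G k0 j := condDir_rep h1 hdcb hk0' hj
      have hij : i ≠ j := by
        rintro rfl
        exact hneab (hi.symm.trans hj)
      have hjk : j ≠ k0 := by
        rintro rfl
        exact hdcb.1 (hk0'.symm.trans hj)
      have hik : i ≠ k0 := by
        rintro rfl
        exact heac (hi.symm.trans hk0')
      have hres : G.Adj (xv i) (xv k0) :=
        h1 i j k0 hij hjk hik (xv i) (by left; rfl) hxx hde.2.symm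
      exact (hat_adj_xx e).mpr ⟨hac, Or.inl ⟨heac, i, k0, hi, hk0', hres⟩⟩
    · -- z = yv a
      simp only [Set.mem_singleton_iff] at hz
      subst hz
      have hdba : condDir G (e b) (e a) := by
        rcases (hat_adj_xy e).mp hzb.symm with rfl | hd
        · exact absurd rfl hab.symm
        · exact hd
      have : condDir G (e c) (e a) :=
        condDir_trans' (fun h => hac (e.injective h).symm) hdcb hdba
      exact ((hat_adj_xy e).mpr (Or.inr this)).symm
  · -- CondII
    intro a b hxy hxx
    have hab : a ≠ b := ((hat_adj_xx e).mp hxx).1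
    have hd : condDir G (e a) (e b) := by
      rcases (hat_adj_xy e).mp hxy with rfl | h
      · exact absurd rfl hab
      · exact h
    obtain ⟨hne, i, j, hi, hj, hu⟩ := hat_adj_xx' e hxx
    exact h2 i j (condDir_rep h1 hd hi hj).2 hu
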